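/- Let ℳ be a countable structure in a countable relational language ℒ, with group action Aut(ℳ) ↷ M. For finite B ⊆ M and a ∈ M, define a ∈ Dcl(B) iff Drk(a, B) < ∞. Then a ∈ Dcl(B) implies that a ∈ M₀ for every ℒ_{ω₁,ω}-elementary substructure ℳ₀ of ℳ with B ⊆ M₀. -/
import Mathlib


/-- `a' ≅_B a`: some `g ∈ P` fixes `B` pointwise and sends `a` to `a'`. -/
def ConjOver (P : Type*) [Group P] {I : Type*} [MulAction P I] (B : Set I) (a a' : I) : Prop :=
  ∃ g : P, (∀ b ∈ B, g • b = b) ∧ g • a = a'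

/-- Deissler rank: `DrkLe P α a B` means `Drk(a, B) ≤ α`. -/
def DrkLe (P : Type*) [Group P] {I : Type*} [MulAction P I] (α : Ordinal) (a : I) (B : Set I) : Prop :=
  (∀ g : P, (∀ b ∈ B, g • b = b) → g • a = a) ∨
  ∃ c : I, ∀ c' : I, ConjOver P B c c' →
    ∃ β : Ordinal, ∃ _ : β < α, DrkLe P β a (insert c' B)
termination_by α


/-- A subset `M₀` of the countable structure carries an `ℒ_{ω₁,ω}`-elementary substructure
iff every finite type over it (in the sense of orbits of the automorphism group `P`)
is realized in it. -/
def IsElemSub (P : Type*) [Group P] {I : Type*} [MulAction P I] (M₀ : Set I) : Prop :=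
  ∀ D : Set I, D.Finite → D ⊆ M₀ → ∀ e : I, ∃ e' ∈ M₀, ConjOver P D e e'

/-- Forward direction of Deissler's theorem: if `Drk(a, B) < ∞` (i.e. `a ∈ Dcl(B)` for
finite `B`), then `a` belongs to every `ℒ_{ω₁,ω}`-elementary substructure containing `B`. -/
theorem stmt_9 {P : Type*} [Group P] {I : Type*} [MulAction P I] [Countable I]
    (B : Set I) (hB : B.Finite) (a : I)
    (h : ∃ α : Ordinal, DrkLe P α a B) :
    ∀ M₀ : Set I, B ⊆ M₀ → IsElemSub P M₀ → a ∈ M₀ := by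
  obtain ⟨α, hα⟩ := h
  induction α using Ordinal.induction generalizing B with
  | h α ih =>
    intro M₀ hBM hM
    rw [DrkLe] at hα
    rcases hα with h1 | ⟨c, hc⟩
    · obtain ⟨a', ha'M, g, hg, hga⟩ := hM B hB hBM a
      rw [h1 g hg] at hga; exact hga ▸ ha'M
    · obtain ⟨c', hc'M, hconj⟩ := hM B hB hBM c
      obtain ⟨β, hβ, hd⟩ := hc c' hconj
      exact ih β hβ (insert c' B) (hB.insert c') hd M₀ (Set.insert_subset hc'M hBM) hM
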